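/- Let n ≥ 4 be an even integer and let C be a locally optimal coloring of K_n. Then for every color μ, every connected component of the graph formed by the μ-colored edges is either a single edge or a path with exactly two edges. -/

import Mathlib

open Finset

/-- A (not necessarily proper) coloring of the edges of `K_n` with the colors `{1, …, n-1}`
(modeled as `Fin (n-1)`).  The values on diagonal elements of `Sym2 (Fin n)` are irrelevant. -/
def EdgeColoring (n : ℕ) : Type := Sym2 (Fin n) → Fin (n - 1)

/-- `aCount C u μ` is the number of `μ`-colored edges of `C` incident with the vertex `u`. -/
def aCount {n : ℕ} (C : EdgeColoring n) (u : Fin n) (μ : Fin (n - 1)) : ℕ :=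
  (Finset.univ.filter (fun v : Fin n => v ≠ u ∧ C s(u, v) = μ)).card

/-- `Phi C = Σ_{u,μ} a_{u,μ}(C)²`. -/
def Phi {n : ℕ} (C : EdgeColoring n) : ℕ :=
  ∑ u : Fin n, ∑ μ : Fin (n - 1), (aCount C u μ) ^ 2

/-- `Psi C` is the number of unordered pairs of distinct incident edges of `K_n` receiving the
same color under `C` (counted as ordered pairs and divided by two). -/
def Psi {n : ℕ} (C : EdgeColoring n) : ℕ :=
  ((Finset.univ : Finset (Sym2 (Fin n) × Sym2 (Fin n))).filter
    (fun p => ¬ p.1.IsDiag ∧ ¬ p.2.IsDiag ∧ p.1 ≠ p.2 ∧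
      (∃ x : Fin n, x ∈ p.1 ∧ x ∈ p.2) ∧ C p.1 = C p.2)).card / 2

/-- `C'` differs from `C` on exactly one edge. -/
def DiffersOnOneEdge {n : ℕ} (C C' : EdgeColoring n) : Prop :=
  ∃ e : Sym2 (Fin n), ¬ e.IsDiag ∧ C' e ≠ C e ∧
    ∀ f : Sym2 (Fin n), ¬ f.IsDiag → f ≠ e → C' f = C f

/-- A coloring is locally optimal if no single-edge recoloring decreases `Psi`. -/
def LocallyOptimal {n : ℕ} (C : EdgeColoring n) : Prop :=
  ∀ C' : EdgeColoring n, DiffersOnOneEdge C C' → Psi C ≤ Psi C'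

/-- A one-factorization: a proper edge coloring of `K_n` with the `n-1` colors. -/
def IsOneFactorization {n : ℕ} (C : EdgeColoring n) : Prop :=
  ∀ e f : Sym2 (Fin n), ¬ e.IsDiag → ¬ f.IsDiag → e ≠ f →
    (∃ x : Fin n, x ∈ e ∧ x ∈ f) → C e ≠ C f

/-- The graph formed by the `μ`-colored edges of `C`. -/
def monoGraph {n : ℕ} (C : EdgeColoring n) (μ : Fin (n - 1)) : SimpleGraph (Fin n) where
  Adj x y := x ≠ y ∧ C s(x, y) = μ
  symm := ⟨fun x y h => ⟨h.1.symm, by rw [Sym2.eq_swap]; exact h.2⟩⟩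
  loopless := ⟨fun x h => h.1 rfl⟩

/-- An IV coloring: for every color `μ`, every connected component of the graph formed by the
`μ`-colored edges is either a single edge or a path with exactly two edges. -/
def IsIVColoring {n : ℕ} (C : EdgeColoring n) : Prop :=
  ∀ μ : Fin (n - 1), ∀ x : Fin n, (∃ y, (monoGraph C μ).Adj x y) →
    (∃ u v : Fin n, (monoGraph C μ).Adj u v ∧
        {w | (monoGraph C μ).Reachable x w} = {u, v}) ∨
    (∃ u v w : Fin n, (monoGraph C μ).Adj u v ∧ (monoGraph C μ).Adj v w ∧
        u ≠ w ∧ ¬ (monoGraph C μ).Adj u w ∧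
        {t | (monoGraph C μ).Reachable x t} = {u, v, w})

/-- `C'` is obtained from `C` by a `(u,v)`-flip. -/
def IsFlip {n : ℕ} (C C' : EdgeColoring n) (u v : Fin n) : Prop :=
  C' s(u, v) = C s(u, v) ∧
  (∀ e : Sym2 (Fin n), ¬ e.IsDiag → u ∉ e → v ∉ e → C' e = C e) ∧
  ∀ w : Fin n, w ≠ u → w ≠ v →
    ((C' s(w, u) = C s(w, u) ∧ C' s(w, v) = C s(w, v)) ∨
     (C' s(w, u) = C s(w, v) ∧ C' s(w, v) = C s(w, u)))

/-- The edges of `K_n` with both endpoints in `S`. -/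
def edgesIn {n : ℕ} (S : Finset (Fin n)) : Finset (Sym2 (Fin n)) :=
  Finset.univ.filter (fun e => ¬ e.IsDiag ∧ ∀ x : Fin n, x ∈ e → x ∈ S)

/-- `gammaColors C S`: the number of distinct colors on edges with both endpoints in `S`. -/
def gammaColors {n : ℕ} (C : EdgeColoring n) (S : Finset (Fin n)) : ℕ :=
  ((edgesIn S).image C).card

/-- The deficit `D(S) = C(|S|, 2) - γ(S)`. -/
def deficit {n : ℕ} (C : EdgeColoring n) (S : Finset (Fin n)) : ℤ :=
  (Nat.choose S.card 2 : ℤ) - gammaColors C S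

set_option linter.unusedSectionVars false

-- the ordered-pair count
lemma card_pairs {n : ℕ} (C : EdgeColoring n) (hn : 0 < n) :
    ((Finset.univ : Finset (Sym2 (Fin n) × Sym2 (Fin n))).filter
    (fun p => ¬ p.1.IsDiag ∧ ¬ p.2.IsDiag ∧ p.1 ≠ p.2 ∧
      (∃ x : Fin n, x ∈ p.1 ∧ x ∈ p.2) ∧ C p.1 = C p.2)).card
    = ∑ u : Fin n, ∑ μ : Fin (n-1), (aCount C u μ * aCount C u μ - aCount C u μ) := by
  classical
  set T := ((Finset.univ : Finset (Sym2 (Fin n) × Sym2 (Fin n))).filter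
    (fun p => ¬ p.1.IsDiag ∧ ¬ p.2.IsDiag ∧ p.1 ≠ p.2 ∧
      (∃ x : Fin n, x ∈ p.1 ∧ x ∈ p.2) ∧ C p.1 = C p.2)) with hT
  set g : Sym2 (Fin n) × Sym2 (Fin n) → Fin n := fun p =>
    if h : ∃ x : Fin n, x ∈ p.1 ∧ x ∈ p.2 then h.choose else ⟨0, hn⟩ with hg
  have hmem : ∀ p ∈ T, ¬ p.1.IsDiag ∧ ¬ p.2.IsDiag ∧ p.1 ≠ p.2 ∧
      (∃ x : Fin n, x ∈ p.1 ∧ x ∈ p.2) ∧ C p.1 = C p.2 := by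
    intro p hp; simpa [hT] using (Finset.mem_filter.mp hp).2
  have huniq : ∀ p ∈ T, ∀ x y : Fin n, x ∈ p.1 → x ∈ p.2 → y ∈ p.1 → y ∈ p.2 → x = y := by
    intro p hp x y hx1 hx2 hy1 hy2
    by_contra hxy
    exact (hmem p hp).2.2.1 (Sym2.eq_of_ne_mem hxy hx1 hy1 hx2 hy2)
  have hgspec : ∀ p ∈ T, ∀ u : Fin n, g p = u ↔ (u ∈ p.1 ∧ u ∈ p.2) := by
    intro p hp u
    have hex := (hmem p hp).2.2.2.1
    constructor
    · rintro rfl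
      simp only [hg, dif_pos hex]
      exact hex.choose_spec
    · intro hu
      simp only [hg, dif_pos hex]
      exact huniq p hp _ _ hex.choose_spec.1 hex.choose_spec.2 hu.1 hu.2
  rw [Finset.card_eq_sum_card_fiberwise (f := g) (t := Finset.univ) (fun p _ => Finset.mem_univ _)]
  apply Finset.sum_congr rfl
  intro u _
  have hfib : T.filter (fun p => g p = u) = T.filter (fun p => u ∈ p.1 ∧ u ∈ p.2) :=
    Finset.filter_congr (fun p hp => hgspec p hp u)
  rw [hfib]
  have hbij : (Finset.univ.filter (fun q : Fin n × Fin n =>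
      q.1 ≠ u ∧ q.2 ≠ u ∧ q.1 ≠ q.2 ∧ C s(u, q.1) = C s(u, q.2))).card
      = (T.filter (fun p => u ∈ p.1 ∧ u ∈ p.2)).card := by
    apply Finset.card_bij (fun q _ => (s(u, q.1), s(u, q.2)))
    · intro q hq
      obtain ⟨h1, h2, h3, h4⟩ := by simpa using hq
      simp only [hT, Finset.mem_filter, Finset.mem_univ, true_and]
      refine ⟨⟨by simp only [Sym2.mk_isDiag_iff]; exact fun h => h1 h.symm,
        by simp only [Sym2.mk_isDiag_iff]; exact fun h => h2 h.symm, ?_,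
        ⟨u, by simp, by simp⟩, h4⟩, by simp, by simp⟩
      intro hcon
      rw [Sym2.eq_iff] at hcon
      rcases hcon with ⟨-, h⟩ | ⟨h, -⟩
      · exact h3 h
      · exact h2 h.symm
    · intro q hq q' hq' heq
      obtain ⟨h1, h2, h3, h4⟩ := by simpa using hq
      obtain ⟨h1', h2', h3', h4'⟩ := by simpa using hq'
      have e1 := congrArg Prod.fst heq
      have e2 := congrArg Prod.snd heq
      simp only [Sym2.eq_iff] at e1 e2
      have ea : q.1 = q'.1 := by
        rcases e1 with ⟨-, h⟩ | ⟨h, h'⟩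
        · exact h
        · exact absurd h.symm h1'
      have eb : q.2 = q'.2 := by
        rcases e2 with ⟨-, h⟩ | ⟨h, h'⟩
        · exact h
        · exact absurd h.symm h2'
      exact Prod.ext ea eb
    · intro p hp
      rw [Finset.mem_filter] at hp
      obtain ⟨hpT, hu1, hu2⟩ := hp
      obtain ⟨hd1, hd2, hne, -, hcol⟩ := hmem p hpT
      have hy := Sym2.other_spec hu1
      have hz := Sym2.other_spec hu2
      refine ⟨(Sym2.Mem.other hu1, Sym2.Mem.other hu2), ?_, ?_⟩
      · simp only [Finset.mem_filter, Finset.mem_univ, true_and]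
        refine ⟨Sym2.other_ne hd1 hu1, Sym2.other_ne hd2 hu2, ?_, by rw [hy, hz]; exact hcol⟩
        intro hcon
        apply hne
        rw [← hy, ← hz, hcon]
      · simp only [hy, hz]
  rw [← hbij]
  rw [Finset.card_eq_sum_card_fiberwise (f := fun q => C s(u, q.1)) (t := Finset.univ)
    (fun q _ => Finset.mem_univ _)]
  apply Finset.sum_congr rfl
  intro μ _
  have : (Finset.univ.filter (fun q : Fin n × Fin n =>
      q.1 ≠ u ∧ q.2 ≠ u ∧ q.1 ≠ q.2 ∧ C s(u, q.1) = C s(u, q.2))).filter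
      (fun q => C s(u, q.1) = μ)
      = (Finset.univ.filter (fun v : Fin n => v ≠ u ∧ C s(u, v) = μ)).offDiag := by
    ext q
    simp only [Finset.mem_filter, Finset.mem_offDiag, Finset.mem_univ, true_and]
    constructor
    · rintro ⟨⟨h1, h2, h3, h4⟩, h5⟩
      exact ⟨⟨h1, h5⟩, ⟨h2, h4 ▸ h5⟩, h3⟩
    · rintro ⟨⟨h1, h5⟩, ⟨h2, h6⟩, h3⟩
      exact ⟨⟨h1, h2, h3, h5.trans h6.symm⟩, h5⟩
  rw [this, Finset.offDiag_card]
  rfl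

section helpers
variable {n : ℕ}

lemma f_even (a : ℕ) : Even (a * a - a) := by
  cases a with
  | zero => simp
  | succ b =>
    have h : (b+1)*(b+1) - (b+1) = b * (b+1) := by
      have : (b+1)*(b+1) = b*(b+1) + (b+1) := by ring
      rw [this, Nat.add_sub_cancel]
    rw [h]
    exact Nat.even_mul_succ_self b

lemma sum_pair_split {β : Type*} [Fintype β] [DecidableEq β] (g : β → ℕ) {μ ν : β}
    (h : μ ≠ ν) : ∑ x, g x = g μ + g ν + ∑ x ∈ Finset.univ \ {μ, ν}, g x := by
  have hsub : ({μ, ν} : Finset β) ⊆ Finset.univ := Finset.subset_univ _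
  rw [← Finset.sum_sdiff hsub, Finset.sum_pair h]
  ring

-- decidable update: since Fin n has DecidableEq, Sym2 too
noncomputable def recolor {n : ℕ} (C : EdgeColoring n) (e : Sym2 (Fin n)) (ν : Fin (n-1)) :
    EdgeColoring n := Function.update C e ν

lemma recolor_self {n : ℕ} {C : EdgeColoring n} {e : Sym2 (Fin n)} {ν : Fin (n-1)} :
    recolor C e ν e = ν := by
  unfold recolor; exact Function.update_self _ _ _

lemma recolor_ne {n : ℕ} (C : EdgeColoring n) {e f : Sym2 (Fin n)} {ν : Fin (n-1)} (h : f ≠ e) :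
    recolor C e ν f = C f := by
  unfold recolor; exact Function.update_of_ne h _ _

lemma sum_aCount (C : EdgeColoring n) (u : Fin n) :
    ∑ μ : Fin (n-1), aCount C u μ = n - 1 := by
  classical
  unfold aCount
  have h1 : ∀ μ : Fin (n-1), Finset.univ.filter (fun v : Fin n => v ≠ u ∧ C s(u, v) = μ)
      = (Finset.univ.erase u).filter (fun v => C s(u, v) = μ) := by
    intro μ; ext v
    simp [Finset.mem_erase, and_comm, and_assoc]
  simp only [h1]
  rw [← Finset.card_eq_sum_card_fiberwise (f := fun v => C s(u, v)) (t := Finset.univ)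
    (fun v _ => Finset.mem_univ _)]
  rw [Finset.card_erase_of_mem (Finset.mem_univ u), Finset.card_univ, Fintype.card_fin]

variable (C : EdgeColoring n) {u v : Fin n} (huv : u ≠ v) {μ ν : Fin (n-1)}
  (hμ : C s(u, v) = μ) (hν : ν ≠ μ)

-- aCount unchanged at vertices other than u, v
lemma aCount_recolor_other {w : Fin n} (hw : w ≠ u) (hw' : w ≠ v) (ξ : Fin (n-1)) :
    aCount (recolor C s(u, v) ν) w ξ = aCount C w ξ := by
  unfold aCount
  congr 1
  apply Finset.filter_congr
  intro x _
  have hne : s(w, x) ≠ s(u, v) := by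
    intro hcon
    rw [Sym2.eq_iff] at hcon
    rcases hcon with ⟨rfl, rfl⟩ | ⟨rfl, rfl⟩
    · exact hw rfl
    · exact hw' rfl
  rw [recolor_ne C hne]

include huv hμ hν in
lemma aCount_recolor_self_other (ξ : Fin (n-1)) (hξμ : ξ ≠ μ) (hξν : ξ ≠ ν) :
    aCount (recolor C s(u, v) ν) u ξ = aCount C u ξ := by
  unfold aCount
  congr 1
  apply Finset.filter_congr
  intro x _
  by_cases hx : x = v
  · subst hx
    simp only [recolor_self]
    constructor
    · rintro ⟨-, rfl⟩; exact absurd rfl hξν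
    · rintro ⟨-, h⟩; rw [hμ] at h; exact absurd h.symm hξμ
  · have hne : s(u, x) ≠ s(u, v) := by
      intro hcon
      rw [Sym2.eq_iff] at hcon
      rcases hcon with ⟨-, h⟩ | ⟨h, -⟩
      · exact hx h
      · exact huv h
    rw [recolor_ne C hne]

include huv hμ hν in
lemma aCount_recolor_self_nu :
    aCount (recolor C s(u, v) ν) u ν = aCount C u ν + 1 := by
  unfold aCount
  have hset : Finset.univ.filter (fun x : Fin n => x ≠ u ∧ (recolor C s(u, v) ν) s(u, x) = ν)
      = insert v (Finset.univ.filter (fun x : Fin n => x ≠ u ∧ C s(u, x) = ν)) := by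
    ext x
    simp only [Finset.mem_filter, Finset.mem_insert, Finset.mem_univ, true_and]
    by_cases hx : x = v
    · subst hx
      simp only [recolor_self]
      constructor
      · intro _; exact Or.inl trivial
      · intro _; exact ⟨fun h => huv h.symm, trivial⟩
    · have hne : s(u, x) ≠ s(u, v) := by
        intro hcon
        rw [Sym2.eq_iff] at hcon
        rcases hcon with ⟨-, h⟩ | ⟨h, -⟩
        · exact hx h
        · exact huv h
      rw [recolor_ne C hne]
      simp [hx]
  rw [hset, Finset.card_insert_of_notMem]
  simp only [Finset.mem_filter, not_and]
  intro _ _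
  rw [hμ]
  exact fun hh => hν hh.symm

include huv hμ hν in
lemma aCount_recolor_self_mu :
    aCount C u μ = aCount (recolor C s(u, v) ν) u μ + 1 := by
  unfold aCount
  have hset : Finset.univ.filter (fun x : Fin n => x ≠ u ∧ C s(u, x) = μ)
      = insert v (Finset.univ.filter
        (fun x : Fin n => x ≠ u ∧ (recolor C s(u, v) ν) s(u, x) = μ)) := by
    ext x
    simp only [Finset.mem_filter, Finset.mem_insert, Finset.mem_univ, true_and]
    by_cases hx : x = v
    · subst hx
      simp only [recolor_self]
      constructor
      · intro _; exact Or.inl trivial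
      · intro _; exact ⟨fun h => huv h.symm, hμ⟩
    · have hne : s(u, x) ≠ s(u, v) := by
        intro hcon
        rw [Sym2.eq_iff] at hcon
        rcases hcon with ⟨-, h⟩ | ⟨h, -⟩
        · exact hx h
        · exact huv h
      rw [recolor_ne C hne]
      simp [hx]
  rw [hset, Finset.card_insert_of_notMem]
  simp only [Finset.mem_filter, not_and]
  intro _ _
  simp only [recolor_self]
  exact hν



lemma f_succ_eq (a : ℕ) : (a+1)*(a+1) - (a+1) = a*a + a := by
  have h : (a+1)*(a+1) = a*a + a + (a+1) := by ring
  omega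

include huv hμ hν in
lemma vertex_sum_recolor :
    (∑ ξ : Fin (n-1), (aCount (recolor C s(u, v) ν) u ξ * aCount (recolor C s(u, v) ν) u ξ
        - aCount (recolor C s(u, v) ν) u ξ)) + 2 * aCount C u μ
    = (∑ ξ : Fin (n-1), (aCount C u ξ * aCount C u ξ - aCount C u ξ))
      + 2 * aCount C u ν + 2 := by
  have hμν : μ ≠ ν := hν.symm
  rw [sum_pair_split (fun ξ => aCount (recolor C s(u, v) ν) u ξ * aCount (recolor C s(u, v) ν) u ξ
        - aCount (recolor C s(u, v) ν) u ξ) hμν]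
  rw [sum_pair_split (fun ξ => aCount C u ξ * aCount C u ξ - aCount C u ξ) hμν]
  have hrest : ∑ x ∈ Finset.univ \ {μ, ν},
      (aCount (recolor C s(u, v) ν) u x * aCount (recolor C s(u, v) ν) u x
        - aCount (recolor C s(u, v) ν) u x)
      = ∑ x ∈ Finset.univ \ {μ, ν}, (aCount C u x * aCount C u x - aCount C u x) := by
    apply Finset.sum_congr rfl
    intro ξ hξ
    simp only [Finset.mem_sdiff, Finset.mem_insert, Finset.mem_singleton] at hξ
    push_neg at hξ
    rw [aCount_recolor_self_other C huv hμ hν ξ hξ.2.1 hξ.2.2]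
  rw [hrest]
  have h1 : aCount C u μ = aCount (recolor C s(u, v) ν) u μ + 1 :=
    aCount_recolor_self_mu C huv hμ hν
  have h2 : aCount (recolor C s(u, v) ν) u ν = aCount C u ν + 1 :=
    aCount_recolor_self_nu C huv hμ hν
  set A := aCount (recolor C s(u, v) ν) u μ with hA
  set B := aCount C u ν with hB
  rw [h1, h2, f_succ_eq A, f_succ_eq B]
  have hA2 : A ≤ A * A := Nat.le_mul_self A
  have hB2 : B ≤ B * B := Nat.le_mul_self B
  omega

end helpers

def Ssum {n : ℕ} (C : EdgeColoring n) : ℕ :=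
  ∑ u : Fin n, ∑ μ : Fin (n-1), (aCount C u μ * aCount C u μ - aCount C u μ)

lemma Ssum_even {n : ℕ} (C : EdgeColoring n) : Even (Ssum C) := by
  apply Finset.even_sum
  intro u _
  apply Finset.even_sum
  intro μ _
  exact f_even _

lemma Ssum_recolor {n : ℕ} (C : EdgeColoring n) {u v : Fin n} (huv : u ≠ v)
    {μ ν : Fin (n-1)} (hμ : C s(u, v) = μ) (hν : ν ≠ μ) :
    Ssum (recolor C s(u, v) ν) + 2 * (aCount C u μ + aCount C v μ)
    = Ssum C + 2 * (aCount C u ν + aCount C v ν) + 4 := by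
  unfold Ssum
  rw [sum_pair_split (fun w => ∑ ξ : Fin (n-1),
    (aCount (recolor C s(u, v) ν) w ξ * aCount (recolor C s(u, v) ν) w ξ
      - aCount (recolor C s(u, v) ν) w ξ)) huv]
  rw [sum_pair_split (fun w => ∑ ξ : Fin (n-1),
    (aCount C w ξ * aCount C w ξ - aCount C w ξ)) huv]
  have hrest : ∑ w ∈ Finset.univ \ {u, v}, (∑ ξ : Fin (n-1),
      (aCount (recolor C s(u, v) ν) w ξ * aCount (recolor C s(u, v) ν) w ξ
        - aCount (recolor C s(u, v) ν) w ξ))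
      = ∑ w ∈ Finset.univ \ {u, v}, (∑ ξ : Fin (n-1),
      (aCount C w ξ * aCount C w ξ - aCount C w ξ)) := by
    apply Finset.sum_congr rfl
    intro w hw
    simp only [Finset.mem_sdiff, Finset.mem_insert, Finset.mem_singleton] at hw
    push_neg at hw
    apply Finset.sum_congr rfl
    intro ξ _
    rw [aCount_recolor_other C hw.2.1 hw.2.2 ξ]
  rw [hrest]
  have h1 := vertex_sum_recolor C huv hμ hν
  have h2 : (∑ ξ : Fin (n-1), (aCount (recolor C s(u, v) ν) v ξ * aCount (recolor C s(u, v) ν) v ξ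
        - aCount (recolor C s(u, v) ν) v ξ)) + 2 * aCount C v μ
      = (∑ ξ : Fin (n-1), (aCount C v ξ * aCount C v ξ - aCount C v ξ))
        + 2 * aCount C v ν + 2 := by
    have hswap : s(v, u) = s(u, v) := Sym2.eq_swap
    have := vertex_sum_recolor C huv.symm (by rw [hswap]; exact hμ) hν
    rw [hswap] at this
    exact this
  omega

lemma differs_recolor {n : ℕ} (C : EdgeColoring n) {u v : Fin n} (huv : u ≠ v)
    {ν : Fin (n-1)} (hν : ν ≠ C s(u, v)) :
    DiffersOnOneEdge C (recolor C s(u, v) ν) := by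
  refine ⟨s(u, v), by simp [Sym2.mk_isDiag_iff]; exact huv, ?_, ?_⟩
  · simp only [recolor_self]
    exact hν
  · intro f _ hf
    rw [recolor_ne C hf]



lemma Psi_eq {n : ℕ} (hn : 0 < n) (C : EdgeColoring n) : Psi C = Ssum C / 2 := by
  unfold Psi Ssum
  rw [card_pairs C hn]

lemma key_ineq {n : ℕ} (hn : 0 < n) {C : EdgeColoring n} (hC : LocallyOptimal C)
    {u v : Fin n} (huv : u ≠ v) :
    aCount C u (C s(u, v)) + aCount C v (C s(u, v)) ≤ 3 := by
  classical
  set μ := C s(u, v) with hμ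
  by_contra hcon
  push_neg at hcon
  have hsum : ∑ ξ : Fin (n-1), (aCount C u ξ + aCount C v ξ) = (n - 1) + (n - 1) := by
    rw [Finset.sum_add_distrib, sum_aCount, sum_aCount]
  have hex : ∃ ν : Fin (n-1), ν ≠ μ ∧ aCount C u ν + aCount C v ν ≤ 1 := by
    by_contra hall
    push_neg at hall
    have hsplit : ∑ ξ : Fin (n-1), (aCount C u ξ + aCount C v ξ)
        = (aCount C u μ + aCount C v μ)
          + ∑ ξ ∈ Finset.univ.erase μ, (aCount C u ξ + aCount C v ξ) :=
      (Finset.add_sum_erase _ _ (Finset.mem_univ μ)).symm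
    have hlow := Finset.card_nsmul_le_sum (Finset.univ.erase μ)
      (fun ξ => aCount C u ξ + aCount C v ξ) 2
      (fun ξ hξ => hall ξ (Finset.ne_of_mem_erase hξ))
    rw [Finset.card_erase_of_mem (Finset.mem_univ μ), Finset.card_univ, Fintype.card_fin,
      smul_eq_mul] at hlow
    omega
  obtain ⟨ν, hνμ, hble⟩ := hex
  have hd := differs_recolor C huv (by rw [← hμ]; exact hνμ)
  have hpsi := hC _ hd
  rw [Psi_eq hn C, Psi_eq hn (recolor C s(u, v) ν)] at hpsi
  obtain ⟨k, hk⟩ := Ssum_even C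
  obtain ⟨m, hm⟩ := Ssum_even (recolor C s(u, v) ν)
  have hrec := Ssum_recolor C huv hμ.symm hνμ
  omega

lemma mem_aFilter {n : ℕ} (C : EdgeColoring n) {μ : Fin (n-1)} {x z : Fin n} :
    (monoGraph C μ).Adj x z ↔
      z ∈ Finset.univ.filter (fun v : Fin n => v ≠ x ∧ C s(x, v) = μ) := by
  simp only [Finset.mem_filter, Finset.mem_univ, true_and]
  constructor
  · rintro ⟨h1, h2⟩; exact ⟨h1.symm, h2⟩
  · rintro ⟨h1, h2⟩; exact ⟨h1.symm, h2⟩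

lemma one_le_aCount {n : ℕ} {C : EdgeColoring n} {μ : Fin (n-1)} {x z : Fin n}
    (h : (monoGraph C μ).Adj x z) : 1 ≤ aCount C x μ :=
  Finset.card_pos.mpr ⟨z, (mem_aFilter C).mp h⟩

lemma unique_nbr {n : ℕ} {C : EdgeColoring n} {μ : Fin (n-1)} {x y : Fin n}
    (h1 : aCount C x μ = 1) (hy : (monoGraph C μ).Adj x y) :
    ∀ z, (monoGraph C μ).Adj x z → z = y := by
  intro z hz
  obtain ⟨a, ha⟩ := Finset.card_eq_one.mp h1
  have hyy := (mem_aFilter C).mp hy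
  have hzz := (mem_aFilter C).mp hz
  rw [ha, Finset.mem_singleton] at hyy hzz
  rw [hzz, hyy]

lemma second_nbr {n : ℕ} {C : EdgeColoring n} {μ : Fin (n-1)} {x y : Fin n}
    (h2 : aCount C x μ = 2) (hy : (monoGraph C μ).Adj x y) :
    ∃ z, (monoGraph C μ).Adj x z ∧ z ≠ y ∧
      ∀ w, (monoGraph C μ).Adj x w → w = y ∨ w = z := by
  obtain ⟨a, b, hab, hset⟩ := Finset.card_eq_two.mp h2
  have hyy := (mem_aFilter C).mp hy
  rw [hset, Finset.mem_insert, Finset.mem_singleton] at hyy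
  have hmem : ∀ c : Fin n, c = a ∨ c = b → (monoGraph C μ).Adj x c := by
    intro c hc
    apply (mem_aFilter C).mpr
    rw [hset, Finset.mem_insert, Finset.mem_singleton]
    exact hc
  rcases hyy with rfl | rfl
  · refine ⟨b, hmem b (Or.inr rfl), fun h => hab h.symm, ?_⟩
    intro w hw
    have := (mem_aFilter C).mp hw
    rw [hset, Finset.mem_insert, Finset.mem_singleton] at this
    exact this
  · refine ⟨a, hmem a (Or.inl rfl), fun h => hab h, ?_⟩
    intro w hw
    have := (mem_aFilter C).mp hw
    rw [hset, Finset.mem_insert, Finset.mem_singleton] at this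
    exact this.symm

lemma reachable_subset {V} {G : SimpleGraph V} (S : Set V)
    (hS : ∀ a ∈ S, ∀ b, G.Adj a b → b ∈ S) {x t : V} (hx : x ∈ S)
    (h : G.Reachable x t) : t ∈ S := by
  obtain ⟨w⟩ := h
  induction w with
  | nil => exact hx
  | @cons a b c hab p ih => exact ih (hS a hx b hab)


/-- In a locally optimal coloring, for every color every connected component of
the graph formed by the edges of that color is a single edge or a path with exactly two edges. -/
theorem locally_optimal_isIV (n : ℕ) (hn : Even n) (h4 : 4 ≤ n)
    (C : EdgeColoring n) (hC : LocallyOptimal C) :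
    IsIVColoring C := by
  intro μ x hx
  obtain ⟨y, hxy⟩ := hx
  set G := monoGraph C μ with hG
  have hkey : ∀ a b : Fin n, G.Adj a b → aCount C a μ + aCount C b μ ≤ 3 := by
    intro a b hab
    obtain ⟨hne, hcol⟩ := hab
    have := key_ineq (by omega : 0 < n) hC hne
    rwa [hcol] at this
  have hdx : 1 ≤ aCount C x μ := one_le_aCount hxy
  have hdy : 1 ≤ aCount C y μ := one_le_aCount hxy.symm
  have hsum := hkey x y hxy
  have hcases : (aCount C x μ = 1 ∧ aCount C y μ = 1) ∨
      (aCount C x μ = 2 ∧ aCount C y μ = 1) ∨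
      (aCount C x μ = 1 ∧ aCount C y μ = 2) := by omega
  rcases hcases with ⟨h1, h2⟩ | ⟨h1, h2⟩ | ⟨h1, h2⟩
  · -- single edge x—y
    left
    refine ⟨x, y, hxy, ?_⟩
    have hclosed : ∀ a ∈ ({x, y} : Set (Fin n)), ∀ b, G.Adj a b → b ∈ ({x, y} : Set (Fin n)) := by
      intro a ha b hab
      rcases ha with rfl | ha
      · right; exact unique_nbr h1 hxy b hab
      · rw [Set.mem_singleton_iff] at ha; subst ha
        left; exact unique_nbr h2 hxy.symm b hab
    apply Set.eq_of_subset_of_subset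
    · intro t ht
      exact reachable_subset _ hclosed (Set.mem_insert x _) ht
    · intro t ht
      rcases ht with rfl | ht
      · exact SimpleGraph.Reachable.refl t
      · rw [Set.mem_singleton_iff] at ht; subst ht
        exact hxy.reachable
  · -- x is the middle vertex: path y—x—z
    right
    obtain ⟨z, hxz, hzy, hall⟩ := second_nbr h1 hxy
    have hdz1 : aCount C z μ = 1 := by
      have := hkey x z hxz
      have := one_le_aCount hxz.symm
      omega
    have hznx : z ≠ x := fun h => (hxz.ne h.symm).elim
    have hnyz : ¬ G.Adj y z := by
      intro h
      have := unique_nbr h2 hxy.symm z h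
      exact hznx this
    refine ⟨y, x, z, hxy.symm, hxz, fun h => hzy h.symm, hnyz, ?_⟩
    have hclosed : ∀ a ∈ ({y, x, z} : Set (Fin n)), ∀ b, G.Adj a b →
        b ∈ ({y, x, z} : Set (Fin n)) := by
      intro a ha b hab
      rcases ha with rfl | ha
      · right; left
        exact unique_nbr h2 hxy.symm b hab
      · rcases ha with rfl | ha
        · rcases hall b hab with rfl | rfl
          · left; rfl
          · right; right; rfl
        · rw [Set.mem_singleton_iff] at ha; subst ha
          right; left
          exact unique_nbr hdz1 hxz.symm b hab
    apply Set.eq_of_subset_of_subset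
    · intro t ht
      exact reachable_subset _ hclosed (by right; left; rfl) ht
    · intro t ht
      rcases ht with rfl | ht
      · exact hxy.reachable
      · rcases ht with rfl | ht
        · exact SimpleGraph.Reachable.refl t
        · rw [Set.mem_singleton_iff] at ht; subst ht
          exact hxz.reachable
  · -- y is the middle vertex: path x—y—z
    right
    obtain ⟨z, hyz, hzx, hall⟩ := second_nbr h2 hxy.symm
    have hdz1 : aCount C z μ = 1 := by
      have := hkey y z hyz
      have := one_le_aCount hyz.symm
      omega
    have hzny : z ≠ y := fun h => (hyz.ne h.symm).elim
    have hnxz : ¬ G.Adj x z := by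
      intro h
      have := unique_nbr h1 hxy z h
      exact hzny this
    refine ⟨x, y, z, hxy, hyz, fun h => hzx h.symm, hnxz, ?_⟩
    have hclosed : ∀ a ∈ ({x, y, z} : Set (Fin n)), ∀ b, G.Adj a b →
        b ∈ ({x, y, z} : Set (Fin n)) := by
      intro a ha b hab
      rcases ha with rfl | ha
      · right; left
        exact unique_nbr h1 hxy b hab
      · rcases ha with rfl | ha
        · rcases hall b hab with rfl | rfl
          · left; rfl
          · right; right; rfl
        · rw [Set.mem_singleton_iff] at ha; subst ha
          right; left
          exact unique_nbr hdz1 hyz.symm b hab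
    apply Set.eq_of_subset_of_subset
    · intro t ht
      exact reachable_subset _ hclosed (Set.mem_insert x _) ht
    · intro t ht
      rcases ht with rfl | ht
      · exact SimpleGraph.Reachable.refl t
      · rcases ht with rfl | ht
        · exact hxy.reachable
        · rw [Set.mem_singleton_iff] at ht; subst ht
          exact (hxy.reachable).trans hyz.reachable
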